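/- Let E be a finite-dimensional real inner product space, F, Φ : E → ℝ differentiable with F ≥ 0 and Φ ≥ 0, g : [0,∞) → [0,∞) monotone nondecreasing with g(0) = 0, and ψ : [0,∞) → (0,∞) monotone nondecreasing with ‖∇F(u)‖² ≤ ψ(F(u)) for all u ∈ E. Let σ : [0,∞) → ℝ be the function with σ(0) = 0 and σ'(z) = g(z)/ψ(z) for all z ≥ 0. Let w : [0,∞) → E be a gradient-flow trajectory of F such that F(w(t)) → 0 and Φ(w(t)) → 0 as t → ∞, and such that ⟨∇Φ(w(t)), ∇F(w(t))⟩ ≥ g(F(w(t))) for all t ≥ 0. Then σ(F(w(0))) ≤ Φ(w(0)). -/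

import Mathlib

open RealInnerProductSpace

/-- Joint self-bounding relation between an objective and an admissible potential:
`σ(F(w(0))) ≤ Φ(w(0))` along a converging gradient-flow trajectory. -/
theorem potential_dominates_sigma_of_F
    {E : Type*} [NormedAddCommGroup E] [InnerProductSpace ℝ E] [FiniteDimensional ℝ E]
    (F Φ : E → ℝ) (hF : Differentiable ℝ F) (hΦ : Differentiable ℝ Φ)
    (hFnonneg : ∀ u, 0 ≤ F u) (hΦnonneg : ∀ u, 0 ≤ Φ u)
    (g ψ : ℝ → ℝ)
    (hgmono : MonotoneOn g (Set.Ici 0)) (hgnn : ∀ z : ℝ, 0 ≤ z → 0 ≤ g z)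
    (hg0 : g 0 = 0)
    (hψmono : MonotoneOn ψ (Set.Ici 0)) (hψpos : ∀ z : ℝ, 0 ≤ z → 0 < ψ z)
    (hFgrad : ∀ u : E, ‖gradient F u‖ ^ 2 ≤ ψ (F u))
    (σ : ℝ → ℝ) (hσ0 : σ 0 = 0)
    (hσ' : ∀ z : ℝ, 0 ≤ z → HasDerivAt σ (g z / ψ z) z)
    (w : ℝ → E)
    (hw : ∀ t : ℝ, 0 ≤ t → HasDerivAt w (-gradient F (w t)) t)
    (hFlim : Filter.Tendsto (fun t => F (w t)) Filter.atTop (nhds 0))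
    (hΦlim : Filter.Tendsto (fun t => Φ (w t)) Filter.atTop (nhds 0))
    (hadm : ∀ t : ℝ, 0 ≤ t → g (F (w t)) ≤ ⟪gradient Φ (w t), gradient F (w t)⟫) :
    σ (F (w 0)) ≤ Φ (w 0) := by
  set L : ℝ → ℝ := fun t => Φ (w t) - σ (F (w t)) with hL
  -- derivative of L at t ≥ 0 is nonpositive
  have hLderiv : ∀ t : ℝ, 0 ≤ t → HasDerivAt L
      (⟪gradient Φ (w t), -gradient F (w t)⟫
        - g (F (w t)) / ψ (F (w t)) * ⟪gradient F (w t), -gradient F (w t)⟫) t := by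
    intro t ht
    have hΦt : HasDerivAt (fun s => Φ (w s)) ⟪gradient Φ (w t), -gradient F (w t)⟫ t := by
      have := ((hΦ (w t)).hasGradientAt.hasFDerivAt).comp_hasDerivAt t (hw t ht)
      exact this
    have hFt : HasDerivAt (fun s => F (w s)) ⟪gradient F (w t), -gradient F (w t)⟫ t := by
      have := ((hF (w t)).hasGradientAt.hasFDerivAt).comp_hasDerivAt t (hw t ht)
      exact this
    have hσt : HasDerivAt (fun s => σ (F (w s)))
        (g (F (w t)) / ψ (F (w t)) * ⟪gradient F (w t), -gradient F (w t)⟫) t :=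
      (hσ' (F (w t)) (hFnonneg (w t))).comp t hFt
    exact hΦt.sub hσt
  have hderiv_nonpos : ∀ t : ℝ, 0 ≤ t →
      ⟪gradient Φ (w t), -gradient F (w t)⟫
        - g (F (w t)) / ψ (F (w t)) * ⟪gradient F (w t), -gradient F (w t)⟫ ≤ 0 := by
    intro t ht
    have hz : (0:ℝ) ≤ F (w t) := hFnonneg (w t)
    have hψz : 0 < ψ (F (w t)) := hψpos _ hz
    have hq : 0 ≤ g (F (w t)) / ψ (F (w t)) := div_nonneg (hgnn _ hz) hψz.le
    have h1 : ⟪gradient F (w t), -gradient F (w t)⟫ = -‖gradient F (w t)‖ ^ 2 := by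
      rw [inner_neg_right, real_inner_self_eq_norm_sq]
    have h2 : ⟪gradient Φ (w t), -gradient F (w t)⟫ = -⟪gradient Φ (w t), gradient F (w t)⟫ := by
      rw [inner_neg_right]
    rw [h1, h2]
    have h3 : g (F (w t)) / ψ (F (w t)) * ‖gradient F (w t)‖ ^ 2 ≤ g (F (w t)) := by
      calc g (F (w t)) / ψ (F (w t)) * ‖gradient F (w t)‖ ^ 2
          ≤ g (F (w t)) / ψ (F (w t)) * ψ (F (w t)) :=
            mul_le_mul_of_nonneg_left (hFgrad (w t)) hq
        _ = g (F (w t)) := div_mul_cancel₀ _ hψz.ne'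
    have := hadm t ht
    nlinarith
  -- L is antitone on Ici 0
  have hanti : AntitoneOn L (Set.Ici (0:ℝ)) := by
    apply antitoneOn_of_deriv_nonpos (convex_Ici 0)
    · exact fun t ht => (hLderiv t ht).continuousAt.continuousWithinAt
    · intro t ht
      rw [interior_Ici] at ht
      exact (hLderiv t ht.le).differentiableAt.differentiableWithinAt
    · intro t ht
      rw [interior_Ici] at ht
      rw [(hLderiv t ht.le).deriv]
      exact hderiv_nonpos t ht.le
  -- L tends to 0 at infinity
  have hσcont : Filter.Tendsto (fun t => σ (F (w t))) Filter.atTop (nhds 0) := by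
    have : ContinuousAt σ 0 := (hσ' 0 le_rfl).continuousAt
    have := this.tendsto.comp hFlim
    simpa [hσ0, Function.comp_def] using this
  have hLlim : Filter.Tendsto L Filter.atTop (nhds 0) := by
    have := hΦlim.sub hσcont
    simpa using this
  have key : (0:ℝ) ≤ L 0 := by
    refine le_of_tendsto hLlim ?_
    filter_upwards [Filter.eventually_ge_atTop (0:ℝ)] with t ht
    exact hanti (Set.self_mem_Ici) ht ht
  simpa [hL] using key
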